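/- Suppose f(h) > f(b) and Xh ≠ Xb. Then g(α) = f((1−α)h + αb) is strictly convex on ℝ and has exactly one minimizer α* over ℝ, and this minimizer satisfies α* > 0. -/

import Mathlib

open Matrix BigOperators Filter

/-- Suppose f(h) > f(b) and Xh ≠ Xb.  Then
g(α) = f((1−α)h + αb) is strictly convex on ℝ, has exactly one minimizer
α* over ℝ, and this minimizer satisfies α* > 0. -/
theorem stmt_1 {n p : ℕ} (X : Matrix (Fin n) (Fin p) ℝ) (y : Fin n → ℝ)
    (lam : ℝ) (hlam : 0 ≤ lam)
    (hX : ∀ i : Fin p, Xᵀ i ≠ 0)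
    (f : (Fin p → ℝ) → ℝ)
    (hf : ∀ β, f β = (1 / 2) * ∑ k, (X.mulVec β k - y k) ^ 2 + lam * ∑ i, |β i|)
    (h b : Fin p → ℝ)
    (g : ℝ → ℝ)
    (hg : ∀ α : ℝ, g α = f ((1 - α) • h + α • b))
    (hfb : f b < f h)
    (hXhb : X.mulVec h ≠ X.mulVec b) :
    StrictConvexOn ℝ Set.univ g ∧
    (∃! αstar : ℝ, ∀ α : ℝ, g αstar ≤ g α) ∧
    (∀ αstar : ℝ, (∀ α : ℝ, g αstar ≤ g α) → 0 < αstar) := by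
  classical
  set v : Fin n → ℝ := fun k => X.mulVec b k - X.mulVec h k with hv
  set c : Fin n → ℝ := fun k => X.mulVec h k - y k with hc
  set d : Fin p → ℝ := fun i => b i - h i with hd
  set q : ℝ → ℝ := fun α => (1/2) * ∑ k, (c k + α * v k)^2 with hq
  set r : ℝ → ℝ := fun α => ∑ i, |h i + α * d i| with hr
  -- explicit form of g
  have hmul : ∀ (α : ℝ) (k : Fin n),
      X.mulVec ((1 - α) • h + α • b) k = X.mulVec h k + α * v k := by
    intro α k
    simp [Matrix.mulVec_add, Matrix.mulVec_smul, hv, smul_eq_mul]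
    ring
  have hG : ∀ α, g α = q α + lam * r α := by
    intro α
    rw [hg, hf, hq, hr]
    congr 1
    · congr 1
      apply Finset.sum_congr rfl
      intro k _
      rw [hmul]
      simp [hc]; ring
    · congr 1
      apply Finset.sum_congr rfl
      intro i _
      congr 1
      simp [hd, smul_eq_mul]
      ring
  -- v is nonzero somewhere
  obtain ⟨k0, hk0'⟩ := Function.ne_iff.mp hXhb
  have hk0 : v k0 ≠ 0 := sub_ne_zero.mpr (Ne.symm hk0')
  have hSpos : 0 < ∑ k, v k ^ 2 := by
    apply Finset.sum_pos' (fun k _ => sq_nonneg _)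
    exact ⟨k0, Finset.mem_univ k0, by positivity⟩
  -- key quadratic identity
  have key : ∀ (x z a e : ℝ), a + e = 1 →
      a * q x + e * q z - q (a * x + e * z)
        = (1/2) * (a * e * (x - z)^2) * ∑ k, v k ^ 2 := by
    intro x z a e hae
    have he : e = 1 - a := by linarith
    subst he
    have e1 : a * q x + (1 - a) * q z - q (a * x + (1 - a) * z)
        = (1/2) * ∑ k, (a * (c k + x * v k)^2 + (1 - a) * (c k + z * v k)^2
            - (c k + (a * x + (1 - a) * z) * v k)^2) := by
      simp only [hq, Finset.sum_sub_distrib, Finset.sum_add_distrib, ← Finset.mul_sum]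
      ring
    rw [e1]
    rw [Finset.sum_congr rfl (fun k _ => by
      show a * (c k + x * v k)^2 + (1 - a) * (c k + z * v k)^2
          - (c k + (a * x + (1 - a) * z) * v k)^2 = a * (1 - a) * (x - z)^2 * v k ^ 2
      ring)]
    rw [← Finset.mul_sum]
    ring
  -- strict convexity of q
  have hqS : StrictConvexOn ℝ Set.univ q := by
    refine ⟨convex_univ, ?_⟩
    intro x _ z _ hxz a e ha he hae
    have hkey := key x z a e hae
    have hxz2 : 0 < (x - z)^2 := by
      have : x - z ≠ 0 := sub_ne_zero.mpr hxz
      positivity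
    have hpos : 0 < (1/2) * (a * e * (x - z)^2) * ∑ k, v k ^ 2 := by positivity
    simp only [smul_eq_mul]
    linarith
  -- convexity of r
  have hrC : ConvexOn ℝ Set.univ r := by
    refine ⟨convex_univ, ?_⟩
    intro x _ z _ a e ha he hae
    simp only [smul_eq_mul, hr, Finset.mul_sum, ← Finset.sum_add_distrib]
    apply Finset.sum_le_sum
    intro i _
    have hrw : h i + (a * x + e * z) * d i = a * (h i + x * d i) + e * (h i + z * d i) := by
      have : e = 1 - a := by linarith
      subst this; ring
    rw [hrw]
    calc |a * (h i + x * d i) + e * (h i + z * d i)|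
        ≤ |a * (h i + x * d i)| + |e * (h i + z * d i)| := abs_add_le _ _
      _ = a * |h i + x * d i| + e * |h i + z * d i| := by
          rw [abs_mul, abs_mul, abs_of_nonneg ha, abs_of_nonneg he]
  -- g equals the explicit function
  have hgeq : g = fun α => q α + lam * r α := funext hG
  have hgS : StrictConvexOn ℝ Set.univ g := by
    rw [hgeq]
    exact hqS.add_convexOn (hrC.smul hlam)
  -- continuity
  have hqcont : Continuous q := by
    apply continuous_const.mul
    apply continuous_finset_sum
    intro k _
    fun_prop
  have hrcont : Continuous r := by
    apply continuous_finset_sum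
    intro i _
    fun_prop
  have hgcont : Continuous g := by
    rw [hgeq]
    exact hqcont.add (continuous_const.mul hrcont)
  -- coercivity
  have hqlow : ∀ α, (1/2) * (c k0 + α * v k0)^2 ≤ q α := by
    intro α
    have h2 : (c k0 + α * v k0)^2 ≤ ∑ k, (c k + α * v k)^2 :=
      Finset.single_le_sum (f := fun k => (c k + α * v k)^2)
        (fun k _ => sq_nonneg _) (Finset.mem_univ k0)
    show (1:ℝ)/2 * (c k0 + α * v k0)^2 ≤ (1/2) * ∑ k, (c k + α * v k)^2
    exact mul_le_mul_of_nonneg_left h2 (by norm_num)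
  have hglow : ∀ α, (1/2) * (c k0 + α * v k0)^2 ≤ g α := by
    intro α
    have h0 : 0 ≤ lam * r α :=
      mul_nonneg hlam (Finset.sum_nonneg fun i _ => abs_nonneg _)
    rw [hG α]
    linarith [hqlow α]
  set t : ℝ := c k0 / v k0 with ht
  have hlowrw : ∀ α : ℝ, (1/2) * (c k0 + α * v k0)^2 = ((1/2) * v k0 ^ 2) * (α + t)^2 := by
    intro α
    rw [ht]
    field_simp
    ring
  have htend2 : Tendsto (fun α : ℝ => (α + t)^2) (cocompact ℝ) atTop := by
    rw [cocompact_eq_atBot_atTop, tendsto_sup]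
    constructor
    · have h1 : Tendsto (fun α : ℝ => α + t) atBot atBot :=
        tendsto_atBot_add_const_right _ t tendsto_id
      have h2 : Tendsto (fun α : ℝ => -(α + t)) atBot atTop :=
        tendsto_neg_atBot_atTop.comp h1
      have h3 := (tendsto_pow_atTop (n := 2) two_ne_zero).comp h2
      refine h3.congr fun x => ?_
      simp only [Function.comp_apply]
      ring
    · have h1 : Tendsto (fun α : ℝ => α + t) atTop atTop :=
        tendsto_atTop_add_const_right _ t tendsto_id
      exact (tendsto_pow_atTop (n := 2) two_ne_zero).comp h1
  have htendlow : Tendsto (fun α : ℝ => (1/2) * (c k0 + α * v k0)^2) (cocompact ℝ) atTop := by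
    have hpos : (0:ℝ) < (1/2) * v k0 ^ 2 := by positivity
    have := htend2.const_mul_atTop hpos
    refine this.congr fun x => ?_
    rw [hlowrw]
  have hgtend : Tendsto g (cocompact ℝ) atTop :=
    tendsto_atTop_mono hglow htendlow
  -- existence of minimizer
  obtain ⟨αs, hαs⟩ := hgcont.exists_forall_le hgtend
  -- values at 0 and 1
  have hg0 : g 0 = f h := by
    rw [hg]; norm_num
  have hg1 : g 1 = f b := by
    rw [hg]; norm_num
  -- positivity of any minimizer
  have hposmin : ∀ αstar : ℝ, (∀ α : ℝ, g αstar ≤ g α) → 0 < αstar := by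
    intro αm hm
    by_contra hle
    push_neg at hle
    rcases eq_or_lt_of_le hle with heq | hlt
    · have := hm 1
      rw [heq, hg0, hg1] at this
      linarith
    · set s : ℝ := 1 / (1 - αm) with hs
      have h1αm : 1 < 1 - αm := by linarith
      have hs0 : 0 < s := by rw [hs]; positivity
      have hs1 : s < 1 := by
        rw [hs]
        rw [div_lt_one (by linarith)]
        linarith
      have hcomb : s * αm + (1 - s) * 1 = 0 := by
        rw [hs]
        field_simp
        ring
      have hne : αm ≠ (1:ℝ) := by linarith
      have hstep := hgS.2 (Set.mem_univ αm) (Set.mem_univ (1:ℝ)) hne hs0 (by linarith : (0:ℝ) < 1 - s) (by ring)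
      simp only [smul_eq_mul, mul_one] at hstep
      have h0eq : s * αm + (1 - s) = 0 := by linarith [hcomb]
      rw [h0eq] at hstep
      have hm1 : g αm ≤ g 1 := hm 1
      have : g 0 < g 1 := by nlinarith
      rw [hg0, hg1] at this
      linarith
  refine ⟨hgS, ⟨αs, hαs, ?_⟩, hposmin⟩
  intro α' hα'
  have hmin1 : IsMinOn g Set.univ α' := isMinOn_iff.mpr fun x _ => hα' x
  have hmin2 : IsMinOn g Set.univ αs := isMinOn_iff.mpr fun x _ => hαs x
  exact hgS.eq_of_isMinOn hmin1 hmin2 (Set.mem_univ _) (Set.mem_univ _)
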